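/- Let 0 < p ≤ 1/3, set p_a = √(p/(1+p)) and p_r = p_a/(1−p_a), and let n ≥ 2 be an integer. Suppose p̂_a and p̂_r satisfy p_a ≤ p̂_a ≤ p_a(1 + 1/n) and p_r ≤ p̂_r ≤ p_r(1 + 1/n), with p̂_a < 1. Then (1−p̂_a)²p̂_r² / (1−p̂_a²) ≥ p(1 − 4/n). -/

import Mathlib

private lemma stmt17_aux (p a pha phr e : ℝ) (hp0 : 0 < p) (ha0 : 0 < a) (hah : a ≤ 1/2)
    (hpp : p * (1 - a ^ 2) = a ^ 2) (h1 : a ≤ pha) (h2 : pha ≤ a + a * e)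
    (h3 : a ≤ phr * (1 - a)) (hphr : 0 ≤ phr) (he0 : 0 < e) (he2 : e ≤ 1/2)
    (h5 : pha < 1) :
    p * (1 - 4 * e) * (1 - pha ^ 2) ≤ (1 - pha) ^ 2 * phr ^ 2 := by
  have hpha0 : 0 ≤ pha := le_trans ha0.le h1
  have hden : 0 < 1 - pha ^ 2 := by nlinarith
  rcases le_or_gt (1 - 4 * e) 0 with h | h
  · have h6 : p * (1 - 4 * e) * (1 - pha ^ 2) ≤ 0 :=
      mul_nonpos_of_nonpos_of_nonneg (mul_nonpos_of_nonneg_of_nonpos hp0.le h) hden.le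
    have h7 : (0:ℝ) ≤ (1 - pha) ^ 2 * phr ^ 2 := mul_nonneg (sq_nonneg _) (sq_nonneg _)
    linarith
  · have h1a : (0:ℝ) < 1 - a := by linarith
    have hae : a * e ≤ 1/4 := by nlinarith
    have hone : (0:ℝ) ≤ 1 - a - a * e := by linarith
    -- step i : a^2 ≤ (phr*(1-a))^2
    have hi : a ^ 2 ≤ (phr * (1 - a)) ^ 2 := pow_le_pow_left₀ ha0.le h3 2
    have hi' : (1 - pha) ^ 2 * a ^ 2 ≤ (1 - pha) ^ 2 * phr ^ 2 * (1 - a) ^ 2 := by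
      have := mul_le_mul_of_nonneg_left hi (sq_nonneg (1 - pha))
      calc (1 - pha) ^ 2 * a ^ 2 ≤ (1 - pha) ^ 2 * (phr * (1 - a)) ^ 2 := this
        _ = (1 - pha) ^ 2 * phr ^ 2 * (1 - a) ^ 2 := by ring
    -- step ii : (1-a-a*e)^2 ≤ (1-pha)^2
    have hii : (1 - a - a * e) ^ 2 ≤ (1 - pha) ^ 2 :=
      pow_le_pow_left₀ hone (by linarith) 2
    have hii' : (1 - a - a * e) ^ 2 * a ^ 2 ≤ (1 - pha) ^ 2 * a ^ 2 :=
      mul_le_mul_of_nonneg_right hii (sq_nonneg a)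
    -- step iii : (1-4e)*(1-a)^2 ≤ (1-a-a*e)^2
    have hiii : (1 - 4 * e) * (1 - a) ^ 2 ≤ (1 - a - a * e) ^ 2 := by
      nlinarith [mul_nonneg (mul_nonneg he0.le h1a.le) (by linarith : (0:ℝ) ≤ 2 - 3 * a),
        sq_nonneg (a * e)]
    have hiii' : (1 - 4 * e) * a ^ 2 * (1 - a) ^ 2 ≤ (1 - a - a * e) ^ 2 * a ^ 2 := by
      have := mul_le_mul_of_nonneg_right hiii (sq_nonneg a)
      calc (1 - 4 * e) * a ^ 2 * (1 - a) ^ 2 = (1 - 4 * e) * (1 - a) ^ 2 * a ^ 2 := by ring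
        _ ≤ (1 - a - a * e) ^ 2 * a ^ 2 := this
    -- step iv : p*(1-4e)*(1-pha^2) ≤ (1-4e)*a^2
    have hsq : a ^ 2 ≤ pha ^ 2 := pow_le_pow_left₀ ha0.le h1 2
    have hiv : p * (1 - 4 * e) * (1 - pha ^ 2) ≤ (1 - 4 * e) * a ^ 2 := by
      have hx : p * (1 - pha ^ 2) ≤ p * (1 - a ^ 2) :=
        mul_le_mul_of_nonneg_left (by linarith) hp0.le
      have hy : p * (1 - pha ^ 2) ≤ a ^ 2 := by linarith
      have hz : (1 - 4 * e) * (p * (1 - pha ^ 2)) ≤ (1 - 4 * e) * a ^ 2 :=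
        mul_le_mul_of_nonneg_left hy h.le
      linarith [hz, (by ring : (1 - 4 * e) * (p * (1 - pha ^ 2)) = p * (1 - 4 * e) * (1 - pha ^ 2))]
    -- combine
    have h1a2 : (0:ℝ) < (1 - a) ^ 2 := by positivity
    have hfin : p * (1 - 4 * e) * (1 - pha ^ 2) * (1 - a) ^ 2
        ≤ (1 - pha) ^ 2 * phr ^ 2 * (1 - a) ^ 2 := by
      have := mul_le_mul_of_nonneg_right hiv (sq_nonneg (1 - a))
      calc p * (1 - 4 * e) * (1 - pha ^ 2) * (1 - a) ^ 2
          ≤ (1 - 4 * e) * a ^ 2 * (1 - a) ^ 2 := this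
        _ ≤ (1 - a - a * e) ^ 2 * a ^ 2 := hiii'
        _ ≤ (1 - pha) ^ 2 * a ^ 2 := hii'
        _ ≤ (1 - pha) ^ 2 * phr ^ 2 * (1 - a) ^ 2 := hi'
    exact (mul_le_mul_iff_of_pos_right h1a2).mp hfin

/-- perturbing `p_a` and `p_r` upward by a relative factor `1 + 1/n` changes
the replace step probability `(1−p_a)²p_r²/(1−p_a²) = p` by at most a `1 − 4/n` factor
(lower bound). -/
theorem stmt17 (p : ℝ) (hp0 : 0 < p) (hp : p ≤ 1 / 3) (n : ℕ) (hn : 2 ≤ n)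
    (p_a p_r pha phr : ℝ)
    (hpa : p_a = Real.sqrt (p / (1 + p))) (hpr : p_r = p_a / (1 - p_a))
    (h1 : p_a ≤ pha) (h2 : pha ≤ p_a * (1 + 1 / n))
    (h3 : p_r ≤ phr) (h4 : phr ≤ p_r * (1 + 1 / n))
    (h5 : pha < 1) :
    p * (1 - 4 / n) ≤ (1 - pha) ^ 2 * phr ^ 2 / (1 - pha ^ 2) := by
  have hp1 : (0:ℝ) < 1 + p := by linarith
  have hfrac : 0 ≤ p / (1 + p) := by positivity
  have ha0 : 0 ≤ p_a := hpa ▸ Real.sqrt_nonneg _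
  have ha2 : p_a ^ 2 = p / (1 + p) := by rw [hpa, Real.sq_sqrt hfrac]
  have ha2' : p_a ^ 2 * (1 + p) = p := by rw [ha2]; field_simp
  have hpp : p * (1 - p_a ^ 2) = p_a ^ 2 := by nlinarith [ha2']
  have hahalf : p_a ≤ 1 / 2 := by nlinarith [sq_nonneg (p_a - 1/2), sq_nonneg p_a]
  have hpa0 : 0 < p_a := by
    rcases lt_or_eq_of_le ha0 with h | h
    · exact h
    · exfalso; nlinarith [ha2']
  have h1a : (0:ℝ) < 1 - p_a := by linarith
  have hn0 : (0:ℝ) < (n:ℝ) := by positivity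
  have hn2 : (2:ℝ) ≤ (n:ℝ) := by exact_mod_cast hn
  have he0 : (0:ℝ) < 1 / (n:ℝ) := by positivity
  have he2 : (1:ℝ) / (n:ℝ) ≤ 1 / 2 := by
    rw [div_le_div_iff₀ hn0 (by norm_num)]; linarith
  have hpr' : p_r * (1 - p_a) = p_a := by rw [hpr]; field_simp
  have hpr0 : 0 < p_r := by rw [hpr]; positivity
  have hphr0 : 0 ≤ phr := le_trans hpr0.le h3
  have h3' : p_a ≤ phr * (1 - p_a) := by
    calc p_a = p_r * (1 - p_a) := hpr'.symm
      _ ≤ phr * (1 - p_a) := mul_le_mul_of_nonneg_right h3 h1a.le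
  have h2' : pha ≤ p_a + p_a * (1 / (n:ℝ)) := by
    have hx : p_a * (1 + 1 / (n:ℝ)) = p_a + p_a * (1 / (n:ℝ)) := by ring
    linarith
  have key := stmt17_aux p p_a pha phr (1 / (n:ℝ)) hp0 hpa0 hahalf hpp h1 h2' h3' hphr0
    he0 he2 h5
  have hpha0 : 0 ≤ pha := le_trans ha0 h1
  have hden : 0 < 1 - pha ^ 2 := by nlinarith
  rw [le_div_iff₀ hden]
  have he : 4 / (n:ℝ) = 4 * (1 / (n:ℝ)) := by ring
  rw [he]
  exact key
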